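/- Suppose n = p + q is odd. Then for every element a of the Clifford algebra Cl = ℝ_{p,q} there exists a real number r (the scalar part of a) such that: (1) ∑_J e_J · a · e^J + ∑_J e_J · (involute a) · e^J = algebraMap ℝ Cl (2^{n+1} · r), where each sum runs over all subsets J of Fin n and involute denotes the principal (grade) involution of Cl; and (2) a − algebraMap ℝ Cl r lies in the ℝ-linear span of the set { e_I : I a nonempty finite subset of Fin n }. -/

import Mathlib

noncomputable section

/-- The weights of the quadratic form of signature `(p, q)`: `1` for the first `p`
coordinates and `-1` for the remaining ones. -/
def cliffordWeight (p : ℕ) {n : ℕ} (i : Fin n) : ℝ := if (i : ℕ) < p then 1 else -1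

/-- The quadratic form of signature `(p, q)` on `Fin (p + q) → ℝ`. -/
def cliffordQ (p q : ℕ) : QuadraticForm ℝ (Fin (p + q) → ℝ) :=
  QuadraticMap.weightedSumSquares ℝ (cliffordWeight p)

/-- The generator `e i` of the Clifford algebra `ℝ_{p,q}`. -/
def cliffordE (p q : ℕ) (i : Fin (p + q)) : CliffordAlgebra (cliffordQ p q) :=
  CliffordAlgebra.ι (cliffordQ p q) (Pi.single i 1)

/-- `e_J`: the product of the generators `e j` for `j ∈ J`, in increasing order. -/
def eLower (p q : ℕ) (J : Finset (Fin (p + q))) : CliffordAlgebra (cliffordQ p q) :=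
  ((J.sort (· ≤ ·)).map (cliffordE p q)).prod

/-- `e^J`: the product of the elements `w j • e j` for `j ∈ J`, in decreasing order. -/
def eUpper (p q : ℕ) (J : Finset (Fin (p + q))) : CliffordAlgebra (cliffordQ p q) :=
  ((J.sort (· ≤ ·)).reverse.map (fun j => cliffordWeight p j • cliffordE p q j)).prod

namespace SPAux

variable (p q : ℕ)

lemma weight_sq (i : Fin (p+q)) : cliffordWeight p i * cliffordWeight p i = 1 := by
  unfold cliffordWeight; split <;> norm_num

lemma Q_single (i : Fin (p+q)) : cliffordQ p q (Pi.single i 1) = cliffordWeight p i := by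
  rw [cliffordQ, QuadraticMap.weightedSumSquares_apply]
  rw [Finset.sum_eq_single i]
  · simp
  · intro j _ hj; simp [Pi.single_apply, hj]
  · simp

lemma e_sq (i : Fin (p+q)) :
    cliffordE p q i * cliffordE p q i = algebraMap ℝ _ (cliffordWeight p i) := by
  rw [cliffordE, CliffordAlgebra.ι_sq_scalar, Q_single]

lemma isOrtho (i j : Fin (p+q)) (hij : i ≠ j) :
    (cliffordQ p q).IsOrtho (Pi.single i 1) (Pi.single j 1) := by
  rw [QuadraticMap.isOrtho_def]
  rw [cliffordQ, QuadraticMap.weightedSumSquares_apply, QuadraticMap.weightedSumSquares_apply,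
    QuadraticMap.weightedSumSquares_apply, ← Finset.sum_add_distrib]
  refine Finset.sum_congr rfl fun k _ => ?_
  rw [← smul_add]
  congr 1
  by_cases hk : k = i <;> by_cases hk2 : k = j <;>
    simp [hk, hk2, Pi.single_apply, hij, Ne.symm hij] <;> ring

lemma e_anticomm {i j : Fin (p+q)} (hij : i ≠ j) :
    cliffordE p q i * cliffordE p q j = -(cliffordE p q j * cliffordE p q i) :=
  CliffordAlgebra.ι_mul_ι_comm_of_isOrtho (isOrtho p q i j hij)


lemma mul_list (i : Fin (p+q)) : ∀ l : List (Fin (p+q)),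
    cliffordE p q i * (l.map (cliffordE p q)).prod =
      ((-1:ℝ) ^ ((l.filter (· ≠ i)).length)) •
        ((l.map (cliffordE p q)).prod * cliffordE p q i)
  | [] => by simp
  | j :: t => by
    rw [List.map_cons, List.prod_cons]
    by_cases hj : j = i
    · subst hj
      rw [List.filter_cons_of_neg (by simp), mul_assoc, ← mul_smul_comm, ← mul_list _ t]
    · rw [List.filter_cons_of_pos (by simp [hj]), ← mul_assoc,
        e_anticomm p q (fun h => hj h.symm), neg_mul, mul_assoc, mul_list i t,
        mul_smul_comm, List.length_cons, pow_succ, ← mul_assoc, ← neg_smul]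
      congr 1
      ring


lemma filter_len (I : Finset (Fin (p+q))) (i : Fin (p+q)) :
    ((I.sort (· ≤ ·)).filter (· ≠ i)).length = (I.erase i).card := by
  have hnd : ((I.sort (· ≤ ·)).filter (· ≠ i)).Nodup := (I.sort_nodup _).filter _
  rw [← List.toFinset_card_of_nodup hnd, List.toFinset_filter, Finset.sort_toFinset]
  congr 1
  ext x
  simp [Finset.mem_erase, and_comm]

lemma conj_single' (j : Fin (p+q)) (I : Finset (Fin (p+q))) :
    cliffordE p q j * eLower p q I * cliffordE p q j =
      (cliffordWeight p j * (-1:ℝ) ^ ((I.erase j).card)) • eLower p q I := by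
  have h := mul_list p q j (I.sort (· ≤ ·))
  rw [filter_len] at h
  rw [eLower, h, smul_mul_assoc, mul_assoc, e_sq, Algebra.algebraMap_eq_smul_one,
    mul_smul_comm, mul_one, smul_smul, mul_comm]

lemma conj_single (j : Fin (p+q)) (I : Finset (Fin (p+q))) :
    cliffordE p q j * eLower p q I * (cliffordWeight p j • cliffordE p q j) =
      ((-1:ℝ) ^ ((I.erase j).card)) • eLower p q I := by
  rw [mul_smul_comm, conj_single', smul_smul, ← mul_assoc, weight_sq, one_mul]

lemma lu_list (x : CliffordAlgebra (cliffordQ p q)) :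
    ∀ l : List (Fin (p+q)),
      (l.map (cliffordE p q)).prod * x *
          ((l.reverse.map (fun j => cliffordWeight p j • cliffordE p q j)).prod) =
        l.foldr (fun j y => cliffordE p q j * y * (cliffordWeight p j • cliffordE p q j)) x
  | [] => by simp
  | j :: t => by
    rw [List.map_cons, List.prod_cons, List.reverse_cons, List.map_append, List.prod_append,
      List.foldr_cons, ← lu_list x t]
    simp [mul_assoc]

lemma conj_list (I : Finset (Fin (p+q))) :
    ∀ l : List (Fin (p+q)),
      l.foldr (fun j y => cliffordE p q j * y * (cliffordWeight p j • cliffordE p q j))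
          (eLower p q I) =
        ((l.map (fun j => (-1:ℝ) ^ ((I.erase j).card))).prod) • eLower p q I
  | [] => by simp
  | j :: t => by
    rw [List.foldr_cons, conj_list I t, List.map_cons, List.prod_cons]
    simp only [smul_mul_assoc, mul_smul_comm, smul_smul]
    rw [conj_single', smul_smul]
    have hw := weight_sq p q j
    congr 1
    linear_combination ((-1:ℝ) ^ ((I.erase j).card) *
      (List.map (fun j => (-1:ℝ) ^ ((I.erase j).card)) t).prod) * hw

lemma prod_sort (J : Finset (Fin (p+q))) (g : Fin (p+q) → ℝ) :
    (((J.sort (· ≤ ·)).map g).prod) = ∏ j ∈ J, g j := by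
  rw [Finset.prod_eq_multiset_prod, ← Finset.sort_eq (s := J) (r := (· ≤ ·)), Multiset.map_coe,
    Multiset.prod_coe]

lemma conj_eLower (J I : Finset (Fin (p+q))) :
    eLower p q J * eLower p q I * eUpper p q J =
      (∏ j ∈ J, (-1:ℝ) ^ ((I.erase j).card)) • eLower p q I := by
  conv_lhs => rw [eLower, eUpper]
  rw [lu_list, conj_list, prod_sort]

lemma eLower_empty : eLower p q ∅ = 1 := by simp [eLower]

lemma conj_one (J : Finset (Fin (p+q))) : eLower p q J * eUpper p q J = 1 := by
  have h := conj_eLower p q J ∅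
  simpa [eLower_empty] using h

lemma inv_list : ∀ l : List (Fin (p+q)),
    CliffordAlgebra.involute ((l.map (cliffordE p q)).prod) =
      ((-1:ℝ) ^ l.length) • (l.map (cliffordE p q)).prod
  | [] => by simp
  | j :: t => by
    rw [List.map_cons, List.prod_cons, map_mul, inv_list t, cliffordE,
      CliffordAlgebra.involute_ι, List.length_cons, pow_succ, neg_mul, mul_smul_comm,
      ← neg_smul]
    congr 1
    ring

lemma involute_eLower (I : Finset (Fin (p+q))) :
    CliffordAlgebra.involute (eLower p q I) = ((-1:ℝ) ^ I.card) • eLower p q I := by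
  rw [eLower, inv_list, Finset.length_sort]


lemma eLower_singleton (i : Fin (p+q)) : eLower p q {i} = cliffordE p q i := by
  simp [eLower, Finset.sort_singleton]

lemma eLower_insert_min {a : Fin (p+q)} {s : Finset (Fin (p+q))}
    (ha : ∀ b ∈ s, a < b) :
    eLower p q (insert a s) = cliffordE p q a * eLower p q s := by
  have h2 : a ∉ s := fun h => lt_irrefl a (ha a h)
  rw [eLower, Finset.sort_insert _ (fun b hb => (ha b hb).le) h2, List.map_cons,
    List.prod_cons, eLower]

lemma e_mul_eLower (K : Finset (Fin (p+q))) :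
    ∀ i : Fin (p+q), ∃ (c : ℝ) (J : Finset (Fin (p+q))),
      J ⊆ insert i K ∧ cliffordE p q i * eLower p q K = c • eLower p q J := by
  induction K using Finset.induction_on_min with
  | empty =>
      intro i
      exact ⟨1, {i}, by simp, by rw [eLower_empty, mul_one, eLower_singleton, one_smul]⟩
  | insert a s ha IH =>
      intro i
      rw [eLower_insert_min p q ha]
      rcases lt_trichotomy i a with hia | hia | hia
      · refine ⟨1, insert i (insert a s), subset_rfl, ?_⟩
        have hball : ∀ b ∈ insert a s, i < b := by
          intro b hb
          rcases Finset.mem_insert.mp hb with rfl | hb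
          · exact hia
          · exact hia.trans (ha b hb)
        rw [one_smul, ← eLower_insert_min p q ha, eLower_insert_min p q hball]
      · subst hia
        refine ⟨cliffordWeight p i, s, ?_, ?_⟩
        · exact (Finset.subset_insert _ _).trans (Finset.subset_insert _ _)
        · rw [← mul_assoc, e_sq, Algebra.algebraMap_eq_smul_one, smul_mul_assoc, one_mul]
      · obtain ⟨c, J, hJ, hEq⟩ := IH i
        have hJa : ∀ b ∈ J, a < b := by
          intro b hb
          rcases Finset.mem_insert.mp (hJ hb) with rfl | hb'
          · exact hia
          · exact ha b hb'
        refine ⟨-c, insert a J, ?_, ?_⟩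
        · intro b hb
          rcases Finset.mem_insert.mp hb with rfl | hb'
          · exact Finset.mem_insert_of_mem (Finset.mem_insert_self _ _)
          · rcases Finset.mem_insert.mp (hJ hb') with rfl | hb''
            · exact Finset.mem_insert_self _ _
            · exact Finset.mem_insert_of_mem (Finset.mem_insert_of_mem hb'')
        · rw [← mul_assoc, e_anticomm p q (ne_of_gt hia), neg_mul, mul_assoc, hEq,
            mul_smul_comm, eLower_insert_min p q hJa, ← neg_smul]

lemma eLower_mul_list (K : Finset (Fin (p+q))) :
    ∀ l : List (Fin (p+q)), ∃ (c : ℝ) (J : Finset (Fin (p+q))),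
      (l.map (cliffordE p q)).prod * eLower p q K = c • eLower p q J
  | [] => ⟨1, K, by rw [List.map_nil, List.prod_nil, one_mul, one_smul]⟩
  | i :: t => by
    obtain ⟨c, J, hEq⟩ := eLower_mul_list K t
    obtain ⟨c', J', _, hEq'⟩ := e_mul_eLower p q J i
    refine ⟨c * c', J', ?_⟩
    rw [List.map_cons, List.prod_cons, mul_assoc, hEq, mul_smul_comm, hEq', smul_smul]

lemma eLower_mul_eLower (I K : Finset (Fin (p+q))) :
    ∃ (c : ℝ) (J : Finset (Fin (p+q))),
      eLower p q I * eLower p q K = c • eLower p q J := by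
  have h := eLower_mul_list p q K (I.sort (· ≤ ·))
  simpa only [eLower] using h

lemma mul_mem_span {x y : CliffordAlgebra (cliffordQ p q)}
    (hx : x ∈ Submodule.span ℝ (Set.range (eLower p q)))
    (hy : y ∈ Submodule.span ℝ (Set.range (eLower p q))) :
    x * y ∈ Submodule.span ℝ (Set.range (eLower p q)) := by
  induction hx using Submodule.span_induction with
  | mem x hxm =>
      induction hy using Submodule.span_induction with
      | mem y hym =>
          obtain ⟨I, rfl⟩ := hxm
          obtain ⟨K, rfl⟩ := hym
          obtain ⟨c, J, hEq⟩ := eLower_mul_eLower p q I K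
          rw [hEq]
          exact Submodule.smul_mem _ _ (Submodule.subset_span ⟨J, rfl⟩)
      | zero => rw [mul_zero]; exact Submodule.zero_mem _
      | add a b _ _ h1 h2 => rw [mul_add]; exact Submodule.add_mem _ h1 h2
      | smul r a _ h1 => rw [mul_smul_comm]; exact Submodule.smul_mem _ _ h1
  | zero => rw [zero_mul]; exact Submodule.zero_mem _
  | add a b _ _ h1 h2 => rw [add_mul]; exact Submodule.add_mem _ h1 h2
  | smul r a _ h1 => rw [smul_mul_assoc]; exact Submodule.smul_mem _ _ h1

lemma span_top :
    Submodule.span ℝ (Set.range (eLower p q)) = ⊤ := by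
  rw [eq_top_iff]
  rintro a -
  induction a using CliffordAlgebra.induction with
  | algebraMap r =>
      rw [Algebra.algebraMap_eq_smul_one, ← eLower_empty p q]
      exact Submodule.smul_mem _ _ (Submodule.subset_span ⟨∅, rfl⟩)
  | ι v =>
      have hv : v = ∑ i, v i • (Pi.single i 1 : Fin (p+q) → ℝ) := by
        conv_lhs => rw [← Finset.univ_sum_single v]
        refine Finset.sum_congr rfl fun i _ => ?_
        rw [← Pi.single_smul, smul_eq_mul, mul_one]
      rw [hv, map_sum]
      refine Submodule.sum_mem _ fun i _ => ?_
      rw [map_smul]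
      refine Submodule.smul_mem _ _ ?_
      exact Submodule.subset_span ⟨{i}, (eLower_singleton p q i).symm ▸ rfl⟩
  | mul a b ha hb => exact mul_mem_span p q ha hb
  | add a b ha hb => exact Submodule.add_mem _ ha hb


def Tsum (x : CliffordAlgebra (cliffordQ p q)) : CliffordAlgebra (cliffordQ p q) :=
  ∑ J : Finset (Fin (p+q)), eLower p q J * x * eUpper p q J

lemma Tsum_add (x y : CliffordAlgebra (cliffordQ p q)) :
    Tsum p q (x + y) = Tsum p q x + Tsum p q y := by
  simp [Tsum, mul_add, add_mul, Finset.sum_add_distrib]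

lemma Tsum_smul (r : ℝ) (x : CliffordAlgebra (cliffordQ p q)) :
    Tsum p q (r • x) = r • Tsum p q x := by
  simp [Tsum, mul_smul_comm, smul_mul_assoc, Finset.smul_sum]

lemma Tsum_algebraMap (r : ℝ) :
    Tsum p q (algebraMap ℝ _ r) = algebraMap ℝ _ (2 ^ (p+q) * r) := by
  have hterm : ∀ J : Finset (Fin (p+q)),
      eLower p q J * algebraMap ℝ _ r * eUpper p q J = algebraMap ℝ _ r := by
    intro J
    rw [← Algebra.commutes r (eLower p q J), mul_assoc, conj_one, mul_one]
  rw [Tsum]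
  rw [Finset.sum_congr rfl fun J _ => hterm J, Finset.sum_const, Finset.card_univ,
    Fintype.card_finset, Fintype.card_fin, ← map_nsmul, nsmul_eq_mul]
  norm_num

lemma Tsum_eLower (I : Finset (Fin (p+q))) :
    Tsum p q (eLower p q I) =
      (∑ J : Finset (Fin (p+q)), ∏ j ∈ J, (-1:ℝ) ^ ((I.erase j).card)) • eLower p q I := by
  rw [Tsum, Finset.sum_congr rfl fun J _ => conj_eLower p q J I, ← Finset.sum_smul]

lemma sum_prod_zero (I : Finset (Fin (p+q))) (hne : I.Nonempty) (he : Even I.card) :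
    (∑ J : Finset (Fin (p+q)), ∏ j ∈ J, (-1:ℝ) ^ ((I.erase j).card)) = 0 := by
  have hT : (∑ J : Finset (Fin (p+q)), ∏ j ∈ J, (-1:ℝ) ^ ((I.erase j).card)) =
      ∏ j : Fin (p+q), ((-1:ℝ) ^ ((I.erase j).card) + 1) := by
    rw [Finset.prod_add]
    simp [Finset.powerset_univ]
  rw [hT]
  obtain ⟨i, hi⟩ := hne
  refine Finset.prod_eq_zero (Finset.mem_univ i) ?_
  have hcard : (I.erase i).card = I.card - 1 := Finset.card_erase_of_mem hi
  have hodd : Odd ((I.erase i).card) := by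
    rw [hcard]
    exact Nat.Even.sub_odd (Finset.card_pos.mpr ⟨i, hi⟩) he odd_one
  rw [hodd.neg_one_pow]
  ring

lemma G_eLower (I : Finset (Fin (p+q))) (hne : I.Nonempty) :
    Tsum p q (eLower p q I) + Tsum p q (CliffordAlgebra.involute (eLower p q I)) = 0 := by
  rw [involute_eLower, Tsum_smul, Tsum_eLower, smul_smul, ← add_smul]
  rcases Nat.even_or_odd I.card with he | ho
  · rw [sum_prod_zero p q I hne he]
    simp
  · rw [ho.neg_one_pow]
    simp

lemma G_span (x : CliffordAlgebra (cliffordQ p q))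
    (hx : x ∈ Submodule.span ℝ
      {y : CliffordAlgebra (cliffordQ p q) |
        ∃ I : Finset (Fin (p+q)), I.Nonempty ∧ y = eLower p q I}) :
    Tsum p q x + Tsum p q (CliffordAlgebra.involute x) = 0 := by
  induction hx using Submodule.span_induction with
  | mem y hy =>
      obtain ⟨I, hne, rfl⟩ := hy
      exact G_eLower p q I hne
  | zero => simp [Tsum]
  | add a b _ _ h1 h2 =>
      rw [map_add, Tsum_add, Tsum_add, add_add_add_comm, h1, h2, add_zero]
  | smul r a _ h1 =>
      rw [map_smul, Tsum_smul, Tsum_smul, ← smul_add, h1, smul_zero]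

lemma exists_r (a : CliffordAlgebra (cliffordQ p q)) :
    ∃ r : ℝ, a - algebraMap ℝ _ r ∈ Submodule.span ℝ
      {y : CliffordAlgebra (cliffordQ p q) |
        ∃ I : Finset (Fin (p+q)), I.Nonempty ∧ y = eLower p q I} := by
  have hmem : a ∈ Submodule.span ℝ (Set.range (eLower p q)) := by
    rw [span_top]; trivial
  have hsub : Set.range (eLower p q) ⊆
      ({(1 : CliffordAlgebra (cliffordQ p q))} : Set _) ∪
        {y | ∃ I : Finset (Fin (p+q)), I.Nonempty ∧ y = eLower p q I} := by
    rintro _ ⟨I, rfl⟩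
    rcases I.eq_empty_or_nonempty with rfl | hne
    · left; rw [eLower_empty]; rfl
    · right; exact ⟨I, hne, rfl⟩
  have h2 := Submodule.span_mono hsub hmem
  rw [Submodule.span_union, Submodule.mem_sup] at h2
  obtain ⟨x, hxmem, y, hymem, hxy⟩ := h2
  obtain ⟨r, rfl⟩ := Submodule.mem_span_singleton.mp hxmem
  refine ⟨r, ?_⟩
  have : a - algebraMap ℝ _ r = y := by
    rw [← hxy, Algebra.algebraMap_eq_smul_one]
    abel
  rw [this]
  exact hymem

end SPAux

theorem scalar_part_odd (p q : ℕ) (h : Odd (p + q)) (a : CliffordAlgebra (cliffordQ p q)) :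
    ∃ r : ℝ,
      ((∑ J : Finset (Fin (p + q)), eLower p q J * a * eUpper p q J) +
          ∑ J : Finset (Fin (p + q)),
            eLower p q J * CliffordAlgebra.involute a * eUpper p q J) =
        algebraMap ℝ (CliffordAlgebra (cliffordQ p q)) (2 ^ (p + q + 1) * r) ∧
      a - algebraMap ℝ (CliffordAlgebra (cliffordQ p q)) r ∈
        Submodule.span ℝ
          {x : CliffordAlgebra (cliffordQ p q) |
            ∃ I : Finset (Fin (p + q)), I.Nonempty ∧ x = eLower p q I} := by
  obtain ⟨r, hr⟩ := SPAux.exists_r p q a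
  refine ⟨r, ?_, hr⟩
  have ha : a = algebraMap ℝ _ r + (a - algebraMap ℝ _ r) := by abel
  have key : SPAux.Tsum p q a + SPAux.Tsum p q (CliffordAlgebra.involute a) =
      algebraMap ℝ _ (2 ^ (p + q + 1) * r) := by
    conv_lhs => rw [ha]
    rw [map_add, SPAux.Tsum_add, SPAux.Tsum_add, add_add_add_comm, SPAux.G_span p q _ hr,
      add_zero]
    have hinv : CliffordAlgebra.involute (algebraMap ℝ (CliffordAlgebra (cliffordQ p q)) r) =
        algebraMap ℝ _ r := by simp
    rw [hinv, SPAux.Tsum_algebraMap, ← map_add]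
    congr 1
    ring
  exact key
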